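/- If F : [0,∞) → [0,∞) is (h-s)₂-convex with h(t) = t and F integrable on [a,b], a < b, then (1/(b-a))·∫ₐᵇ F(x) dx ≤ (F(a)+F(b))/(s+1). -/

import Mathlib

open Set intervalIntegral

theorem hadamard_right_sconvex (s : ℝ) (F : ℝ → ℝ) (a b : ℝ)
    (hs : s ∈ Ioc (0:ℝ) 1)
    (hF_nonneg : ∀ x, 0 ≤ x → 0 ≤ F x)
    (hF : ∀ u v t, 0 ≤ u → 0 ≤ v → t ∈ Icc (0:ℝ) 1 →
      F (t * u + (1 - t) * v) ≤ t ^ s * F u + (1 - t) ^ s * F v)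
    (ha : 0 ≤ a) (hab : a < b)
    (hF_int : IntervalIntegrable F MeasureTheory.volume a b) :
    (1 / (b - a)) * ∫ x in a..b, F x ≤ (F a + F b) / (s + 1) := by
  obtain ⟨hs0, hs1⟩ := hs
  set c : ℝ := b - a with hc
  have hcpos : 0 < c := sub_pos.mpr hab
  have hcne : c ≠ 0 := hcpos.ne'
  have hs1' : (0:ℝ) < s + 1 := by linarith
  -- the majorant
  set G : ℝ → ℝ := fun x => ((b - x) / c) ^ s * F a + ((x - a) / c) ^ s * F b with hG
  have hc1 : Continuous (fun x : ℝ => ((b - x) / c) ^ s * F a) :=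
    ((Real.continuous_rpow_const hs0.le).comp
      ((continuous_const.sub continuous_id).div_const c)).mul continuous_const
  have hc2 : Continuous (fun x : ℝ => ((x - a) / c) ^ s * F b) :=
    ((Real.continuous_rpow_const hs0.le).comp
      ((continuous_id.sub continuous_const).div_const c)).mul continuous_const
  have hcont : Continuous G := hc1.add hc2
  have hG_int : IntervalIntegrable G MeasureTheory.volume a b :=
    hcont.intervalIntegrable a b
  have hmono : ∀ x ∈ Icc a b, F x ≤ G x := by
    intro x hx
    set t : ℝ := (b - x) / c with ht
    have ht0 : 0 ≤ t := div_nonneg (by linarith [hx.2]) hcpos.le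
    have ht1 : t ≤ 1 := by
      rw [div_le_one hcpos]; linarith [hx.1]
    have h1t : 1 - t = (x - a) / c := by
      field_simp [ht]; have htc : t * c = b - x := (by rw [ht]; exact div_mul_cancel₀ _ hcne); linear_combination (-1 : ℝ) * htc + hc
    have hx' : t * a + (1 - t) * b = x := by
      rw [h1t]; field_simp [ht]; have htc : t * c = b - x := (by rw [ht]; exact div_mul_cancel₀ _ hcne); linear_combination a * htc - x * hc
    have := hF a b t ha (by linarith) ⟨ht0, ht1⟩
    rw [hx'] at this
    rw [h1t] at this; exact this
  have key : ∫ x in a..b, F x ≤ ∫ x in a..b, G x :=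
    integral_mono_on hab.le hF_int hG_int hmono
  -- compute integrals of the two rpow pieces
  have I2 : (∫ x in a..b, ((x - a) / c) ^ s) = c / (s + 1) := by
    have e1 : (∫ x in a..b, ((x - a) / c) ^ s)
        = ∫ x in a - a..b - a, (x / c) ^ s :=
      integral_comp_sub_right (fun x => (x / c) ^ s) a
    rw [e1]
    have e2 : (∫ x in a - a..b - a, (x / c) ^ s)
        = c • ∫ x in (a - a)/c..(b - a)/c, x ^ s :=
      integral_comp_div (fun x => x ^ s) hcne
    rw [e2, sub_self, zero_div, ← hc, div_self hcne,
      integral_rpow (Or.inl (by linarith))]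
    rw [Real.one_rpow, Real.zero_rpow (by positivity)]
    rw [smul_eq_mul, sub_zero, mul_one_div]
  have I1 : (∫ x in a..b, ((b - x) / c) ^ s) = c / (s + 1) := by
    have e1 : (∫ x in a..b, ((b - x) / c) ^ s)
        = ∫ x in b - b..b - a, (x / c) ^ s :=
      integral_comp_sub_left (fun x => (x / c) ^ s) b
    rw [e1]
    have e2 : (∫ x in b - b..b - a, (x / c) ^ s)
        = c • ∫ x in (b - b)/c..(b - a)/c, x ^ s :=
      integral_comp_div (fun x => x ^ s) hcne
    rw [e2, sub_self, zero_div, ← hc, div_self hcne,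
      integral_rpow (Or.inl (by linarith))]
    rw [Real.one_rpow, Real.zero_rpow (by positivity)]
    rw [smul_eq_mul, sub_zero, mul_one_div]
  have hGval : (∫ x in a..b, G x) = c / (s + 1) * (F a + F b) := by
    have hsplit : (∫ x in a..b, G x)
        = (∫ x in a..b, ((b - x) / c) ^ s * F a)
          + ∫ x in a..b, ((x - a) / c) ^ s * F b := by
      simp only [hG]
      exact integral_add (hc1.intervalIntegrable a b) (hc2.intervalIntegrable a b)
    rw [hsplit, integral_mul_const, integral_mul_const, I1, I2]
    ring
  rw [one_div]
  calc c⁻¹ * ∫ x in a..b, F x ≤ c⁻¹ * ∫ x in a..b, G x :=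
        mul_le_mul_of_nonneg_left key (by positivity)
    _ = (F a + F b) / (s + 1) := by
        rw [hGval]; field_simp
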